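/- arXiv:1707.09072 — 2 statements merged into one kernel-verified Lean document; each statement's English description precedes it below -/
import Mathlib

section
/- Pressure equals the logarithm of the maximal eigenvalue: Let f:Ω→ℝ be α-Hölder, 0<α<1, and suppose λ_f>0, a strictly positive continuous function h_f, and a Borel probability measure ν_f satisfy L_f h_f = λ_f h_f and ∫_Ω (L_f φ) dν_f = λ_f ∫_Ω φ dν_f for every continuous φ. Then for every x∈Ω, lim_{n→∞} (1/n) log[(L_f^n 𝟙)(x)] = log λ_f, where 𝟙 denotes the constant function 1. -/
open MeasureTheory Filter Topology

noncomputable def dOmega {M : Type*} [MetricSpace M] (x y : ℕ → M) : ℝ :=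
  ∑' n : ℕ, (1 / 2 : ℝ) ^ (n + 1) * dist (x n) (y n)

/-- The sequence `(a, x₁, x₂, …)` obtained by prepending `a` to `x`. -/
def consSeq {M : Type*} (a : M) (x : ℕ → M) : ℕ → M := fun n => Nat.casesOn n a x

/-- The left shift `σ(x₁,x₂,…) = (x₂,x₃,…)`. -/
def shift {M : Type*} (x : ℕ → M) : ℕ → M := fun n => x (n + 1)

/-- The Ruelle transfer operator with a priori measure `μ` and potential `f`. -/
noncomputable def Ruelle {M : Type*} [MeasurableSpace M] (μ : Measure M)
    (f φ : (ℕ → M) → ℝ) : (ℕ → M) → ℝ :=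
  fun x => ∫ a, Real.exp (f (consSeq a x)) * φ (consSeq a x) ∂μ

/-- The `n`-th Birkhoff sum `S_n φ = Σ_{j=0}^{n-1} φ ∘ σ^j`. -/
noncomputable def birkhoff {M : Type*} (φ : (ℕ → M) → ℝ) (n : ℕ) : (ℕ → M) → ℝ :=
  fun x => ∑ j ∈ Finset.range n, φ (shift^[j] x)

/-- `f` is `α`-Hölder with respect to the metric `dOmega`. -/
def IsHolder {M : Type*} [MetricSpace M] (α : ℝ) (f : (ℕ → M) → ℝ) : Prop :=
  ∃ C : ℝ, 0 ≤ C ∧ ∀ x y, |f x - f y| ≤ C * dOmega x y ^ α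

section Aux

variable {M : Type*} [MetricSpace M] [CompactSpace M]

lemma dOmega_self {M : Type*} [MetricSpace M] (x : ℕ → M) : dOmega x x = 0 := by
  simp [dOmega]

lemma continuous_dOmega (x : ℕ → M) : Continuous fun y => dOmega x y := by
  rcases isEmpty_or_nonempty M with hM | hM
  · exact (IsEmpty.false (x 0)).elim
  obtain ⟨D, hD⟩ : ∃ D, ∀ p q : M, dist p q ≤ D := by
    obtain ⟨D, hD⟩ := Metric.isBounded_iff.1 (isCompact_univ : IsCompact (Set.univ : Set M)).isBounded
    exact ⟨D, fun p q => hD (Set.mem_univ p) (Set.mem_univ q)⟩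
  have hD0 : 0 ≤ D := le_trans dist_nonneg (hD hM.some hM.some)
  apply continuous_tsum (f := fun (n : ℕ) (y : ℕ → M) => (1 / 2 : ℝ) ^ (n + 1) * dist (x n) (y n))
    (u := fun n => (1 / 2 : ℝ) ^ (n + 1) * D)
  · intro n
    exact (continuous_const.mul ((continuous_const.dist (continuous_apply n))))
  · apply Summable.mul_right
    exact (summable_geometric_of_lt_one (by norm_num) (by norm_num)).comp_injective
      (add_left_injective 1)
  · intro n y
    rw [Real.norm_eq_abs, abs_of_nonneg (by positivity)]
    exact mul_le_mul_of_nonneg_left (hD _ _) (by positivity)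

lemma holder_continuous {α : ℝ} (hα0 : 0 < α) {f : (ℕ → M) → ℝ}
    (hf : IsHolder α f) : Continuous f := by
  obtain ⟨C, hC0, hC⟩ := hf
  rw [continuous_iff_continuousAt]
  intro x
  have hten : Tendsto (fun y => C * dOmega x y ^ α) (𝓝 x) (𝓝 0) := by
    have h1 : Tendsto (fun y => dOmega x y) (𝓝 x) (𝓝 0) := by
      have h1 := (continuous_dOmega x).continuousAt (x := x)
      rwa [ContinuousAt, dOmega_self] at h1
    have h2 : Tendsto (fun t : ℝ => C * t ^ α) (𝓝 0) (𝓝 0) := by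
      have := (Real.continuousAt_rpow_const 0 α (Or.inr hα0.le)).tendsto
      rw [Real.zero_rpow (ne_of_gt hα0)] at this
      simpa using tendsto_const_nhds.mul this
    exact h2.comp h1
  have hsq : Tendsto (fun y => f y - f x) (𝓝 x) (𝓝 0) := by
    apply squeeze_zero_norm _ hten
    intro y
    rw [Real.norm_eq_abs]
    calc |f y - f x| ≤ C * dOmega y x ^ α := hC y x
      _ = C * dOmega x y ^ α := by
          simp only [dOmega, dist_comm]
  have := hsq.add (tendsto_const_nhds : Tendsto (fun _ : (ℕ → M) => f x) (𝓝 x) (𝓝 (f x)))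
  rw [ContinuousAt]
  simpa using this

variable [MeasurableSpace M] [BorelSpace M]

lemma cont_integrable (μ : Measure M) [IsProbabilityMeasure μ] {g : M → ℝ}
    (hg : Continuous g) : Integrable g μ :=
  hg.integrable_of_hasCompactSupport (HasCompactSupport.of_compactSpace g)

lemma continuous_cons : Continuous fun p : (ℕ → M) × M => consSeq p.2 p.1 := by
  apply continuous_pi
  intro n
  cases n with
  | zero => exact continuous_snd
  | succ n => exact (continuous_apply n).comp continuous_fst

set_option maxHeartbeats 1000000 in
lemma ruelle_continuous (μ : Measure M) [IsProbabilityMeasure μ]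
    {f φ : (ℕ → M) → ℝ} (hfc : Continuous f) (hφ : Continuous φ) :
    Continuous (Ruelle μ f φ) := by
  have key : Continuous fun x : ℕ → M =>
      ∫ a in Set.univ, Real.exp (f (consSeq a x)) * φ (consSeq a x) ∂μ := by
    apply continuous_parametric_integral_of_continuous
      (f := fun (x : ℕ → M) (a : M) => Real.exp (f (consSeq a x)) * φ (consSeq a x))
    · have : Continuous fun p : (ℕ → M) × M => consSeq p.2 p.1 := continuous_cons
      exact ((Real.continuous_exp.comp (hfc.comp this)).mul (hφ.comp this))
    · exact isCompact_univ
  simp only [Measure.restrict_univ] at key; exact key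

lemma ruelle_mono (μ : Measure M) [IsProbabilityMeasure μ]
    {f φ ψ : (ℕ → M) → ℝ} (hfc : Continuous f) (hφ : Continuous φ) (hψ : Continuous ψ)
    (hle : ∀ y, φ y ≤ ψ y) (x : ℕ → M) : Ruelle μ f φ x ≤ Ruelle μ f ψ x := by
  have hcons : Continuous fun a : M => consSeq a x :=
    continuous_cons.comp (Continuous.prodMk (continuous_const : Continuous fun _ : M => x) continuous_id)
  apply integral_mono
  · exact cont_integrable μ ((Real.continuous_exp.comp (hfc.comp hcons)).mul (hφ.comp hcons))
  · exact cont_integrable μ ((Real.continuous_exp.comp (hfc.comp hcons)).mul (hψ.comp hcons))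
  · intro a
    exact mul_le_mul_of_nonneg_left (hle _) (Real.exp_pos _).le

lemma ruelle_smul (μ : Measure M) [IsProbabilityMeasure μ]
    (f φ : (ℕ → M) → ℝ) (c : ℝ) (x : ℕ → M) :
    Ruelle μ f (fun y => c * φ y) x = c * Ruelle μ f φ x := by
  simp only [Ruelle]
  rw [← integral_const_mul]
  congr 1
  ext a
  ring

end Aux

/-- Pressure equals the logarithm of the maximal eigenvalue. -/
theorem pressure_eq_log_eigenvalue
    {M : Type*} [MetricSpace M] [CompactSpace M] [MeasurableSpace M] [BorelSpace M]
    (μ : Measure M) [IsProbabilityMeasure μ]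
    (hfull : ∀ U : Set M, IsOpen U → U.Nonempty → 0 < μ U)
    (α : ℝ) (hα0 : 0 < α) (hα1 : α < 1)
    (f : (ℕ → M) → ℝ) (hf : IsHolder α f)
    (lam : ℝ) (hlam : 0 < lam)
    (h : (ℕ → M) → ℝ) (hhc : Continuous h) (hhpos : ∀ x, 0 < h x)
    (ν : Measure (ℕ → M)) [IsProbabilityMeasure ν]
    (heig : Ruelle μ f h = fun x => lam * h x)
    (heig' : ∀ φ : (ℕ → M) → ℝ, Continuous φ →
      ∫ x, Ruelle μ f φ x ∂ν = lam * ∫ x, φ x ∂ν) :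
    ∀ x : ℕ → M,
      Tendsto (fun n : ℕ => (n : ℝ)⁻¹ * Real.log ((Ruelle μ f)^[n] 1 x))
        atTop (nhds (Real.log lam)) := by
  intro x
  haveI : Nonempty M := ⟨x 0⟩
  haveI : Nonempty (ℕ → M) := ⟨x⟩
  have hfc : Continuous f := holder_continuous hα0 hf
  -- min and max of h
  obtain ⟨z, -, hz⟩ := isCompact_univ.exists_isMinOn (Set.univ_nonempty) hhc.continuousOn
  obtain ⟨w, -, hw⟩ := isCompact_univ.exists_isMaxOn (Set.univ_nonempty) hhc.continuousOn
  set m := h z with hm_def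
  set K := h w with hK_def
  have hm : 0 < m := hhpos z
  have hKpos : 0 < K := hhpos w
  have hmle : ∀ y, m ≤ h y := fun y => isMinOn_iff.1 hz y (Set.mem_univ y)
  have hKle : ∀ y, h y ≤ K := fun y => isMaxOn_iff.1 hw y (Set.mem_univ y)
  -- main inductive bounds
  have key : ∀ n : ℕ, Continuous ((Ruelle μ f)^[n] 1) ∧
      ∀ y, lam ^ n * (h y / K) ≤ (Ruelle μ f)^[n] 1 y ∧
        (Ruelle μ f)^[n] 1 y ≤ lam ^ n * (h y / m) := by
    intro n
    induction n with
    | zero =>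
      refine ⟨continuous_const, fun y => ?_⟩
      simp only [Function.iterate_zero, id_eq, Pi.one_apply, pow_zero, one_mul]
      constructor
      · exact (div_le_one hKpos).2 (hKle y)
      · exact (one_le_div hm).2 (hmle y)
    | succ n ih =>
      obtain ⟨ihc, ihb⟩ := ih
      have hstep : (Ruelle μ f)^[n + 1] 1 = Ruelle μ f ((Ruelle μ f)^[n] 1) :=
        Function.iterate_succ_apply' (Ruelle μ f) n 1
      have hc : Continuous ((Ruelle μ f)^[n + 1] 1) := by
        rw [hstep]; exact ruelle_continuous μ hfc ihc
      refine ⟨hc, fun y => ?_⟩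
      have hLh : ∀ y, Ruelle μ f h y = lam * h y := fun y => congrFun heig y
      constructor
      · have h1 : Ruelle μ f (fun y => lam ^ n / K * h y) y ≤
            Ruelle μ f ((Ruelle μ f)^[n] 1) y := by
          apply ruelle_mono μ hfc (continuous_const.mul hhc) ihc
          intro y
          have := (ihb y).1
          calc lam ^ n / K * h y = lam ^ n * (h y / K) := by ring
            _ ≤ _ := this
        rw [ruelle_smul μ f h (lam ^ n / K) y, hLh y] at h1
        rw [hstep]
        calc lam ^ (n + 1) * (h y / K) = lam ^ n / K * (lam * h y) := by ring
          _ ≤ _ := h1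
      · have h1 : Ruelle μ f ((Ruelle μ f)^[n] 1) y ≤
            Ruelle μ f (fun y => lam ^ n / m * h y) y := by
          apply ruelle_mono μ hfc ihc (continuous_const.mul hhc)
          intro y
          have := (ihb y).2
          calc (Ruelle μ f)^[n] 1 y ≤ lam ^ n * (h y / m) := this
            _ = lam ^ n / m * h y := by ring
        rw [ruelle_smul μ f h (lam ^ n / m) y, hLh y] at h1
        rw [hstep]
        calc (Ruelle μ f) ((Ruelle μ f)^[n] 1) y ≤ lam ^ n / m * (lam * h y) := h1
          _ = lam ^ (n + 1) * (h y / m) := by ring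
  -- positivity of h x / K and h x / m
  have hx := hhpos x
  have hcK : 0 < h x / K := div_pos hx hKpos
  have hcm : 0 < h x / m := div_pos hx hm
  -- squeeze
  have hlow : Tendsto (fun n : ℕ => Real.log lam + (n : ℝ)⁻¹ * Real.log (h x / K))
      atTop (𝓝 (Real.log lam)) := by
    have := (tendsto_inv_atTop_nhds_zero_nat (𝕜 := ℝ)).mul_const (Real.log (h x / K))
    simpa using tendsto_const_nhds.add this
  have hupp : Tendsto (fun n : ℕ => Real.log lam + (n : ℝ)⁻¹ * Real.log (h x / m))
      atTop (𝓝 (Real.log lam)) := by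
    have := (tendsto_inv_atTop_nhds_zero_nat (𝕜 := ℝ)).mul_const (Real.log (h x / m))
    simpa using tendsto_const_nhds.add this
  apply tendsto_of_tendsto_of_tendsto_of_le_of_le' hlow hupp
  · filter_upwards [eventually_ge_atTop 1] with n hn
    have hb := (key n).2 x
    have hpos : 0 < lam ^ n * (h x / K) := by positivity
    have hlog : Real.log (lam ^ n * (h x / K)) ≤ Real.log ((Ruelle μ f)^[n] 1 x) :=
      Real.log_le_log hpos hb.1
    rw [Real.log_mul (by positivity) (ne_of_gt hcK), Real.log_pow] at hlog
    have hn0 : (0 : ℝ) < (n : ℝ) := by exact_mod_cast hn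
    have : (n : ℝ)⁻¹ * ((n : ℝ) * Real.log lam + Real.log (h x / K)) ≤
        (n : ℝ)⁻¹ * Real.log ((Ruelle μ f)^[n] 1 x) :=
      mul_le_mul_of_nonneg_left hlog (by positivity)
    calc Real.log lam + (n : ℝ)⁻¹ * Real.log (h x / K)
        = (n : ℝ)⁻¹ * ((n : ℝ) * Real.log lam + Real.log (h x / K)) := by
          field_simp
      _ ≤ _ := this
  · filter_upwards [eventually_ge_atTop 1] with n hn
    have hb := (key n).2 x
    have hpos : 0 < lam ^ n * (h x / K) := by positivity
    have hposn : 0 < (Ruelle μ f)^[n] 1 x := lt_of_lt_of_le hpos hb.1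
    have hlog : Real.log ((Ruelle μ f)^[n] 1 x) ≤ Real.log (lam ^ n * (h x / m)) :=
      Real.log_le_log hposn hb.2
    rw [Real.log_mul (by positivity) (ne_of_gt hcm), Real.log_pow] at hlog
    have hn0 : (0 : ℝ) < (n : ℝ) := by exact_mod_cast hn
    have : (n : ℝ)⁻¹ * Real.log ((Ruelle μ f)^[n] 1 x) ≤
        (n : ℝ)⁻¹ * ((n : ℝ) * Real.log lam + Real.log (h x / m)) :=
      mul_le_mul_of_nonneg_left hlog (by positivity)
    calc (n : ℝ)⁻¹ * Real.log ((Ruelle μ f)^[n] 1 x) ≤ _ := this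
      _ = Real.log lam + (n : ℝ)⁻¹ * Real.log (h x / m) := by
          field_simp
end

section
/- Uniform convergence of normalized Birkhoff averages under the transfer operator: Let f:Ω→ℝ be continuous and suppose there exist λ>0, a strictly positive continuous function h:Ω→ℝ, and a Borel probability measure ν on Ω such that for every continuous ψ:Ω→ℝ one has ‖λ^{-n} L_f^n ψ − h ∫_Ω ψ dν‖₀ → 0 as n→∞. Then for every continuous φ:Ω→ℝ, ‖(1/n)·L_f^n(S_nφ)/(L_f^n 𝟙) − ∫_Ω φ·h dν‖₀ → 0 as n→∞. -/
open MeasureTheory Filter Topology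

set_option linter.unusedSectionVars false
set_option maxHeartbeats 1000000

section Aux

variable {M : Type*} [MetricSpace M] [CompactSpace M] [MeasurableSpace M] [BorelSpace M]
  (μ : Measure M) [IsProbabilityMeasure μ] (f : (ℕ → M) → ℝ)

lemma shift_consSeq (a : M) (x : ℕ → M) : shift (consSeq a x) = x := rfl

lemma continuous_shift : Continuous (shift : (ℕ → M) → ℕ → M) :=
  continuous_pi fun n => continuous_apply (n + 1)

lemma continuous_consSeq_left (x : ℕ → M) : Continuous fun a : M => consSeq a x := by
  apply continuous_pi
  intro n
  cases n with
  | zero => exact continuous_id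
  | succ m => exact continuous_const

lemma continuous_consSeq_right (a : M) : Continuous fun x : ℕ → M => consSeq a x := by
  apply continuous_pi
  intro n
  cases n with
  | zero => exact continuous_const
  | succ m => exact continuous_apply m

/-- sup-norm bound for a continuous function on the compact space `ℕ → M`. -/
lemma bound_abs {g : (ℕ → M) → ℝ} (hg : Continuous g) :
    ∃ C : ℝ, 0 ≤ C ∧ ∀ y, |g y| ≤ C := by
  rcases isEmpty_or_nonempty (ℕ → M) with hE | hNE
  · exact ⟨0, le_refl 0, fun y => (hE.false y).elim⟩
  · obtain ⟨y₀, -, hy₀⟩ := isCompact_univ.exists_isMaxOn Set.univ_nonempty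
      hg.abs.continuousOn
    exact ⟨|g y₀|, abs_nonneg _, fun y => hy₀ (Set.mem_univ y)⟩

lemma ruelle_integrand_continuous (hf : Continuous f) {ψ : (ℕ → M) → ℝ}
    (hψ : Continuous ψ) (x : ℕ → M) :
    Continuous fun a => Real.exp (f (consSeq a x)) * ψ (consSeq a x) := by
  have h1 : Continuous fun a : M => consSeq a x := continuous_consSeq_left x
  exact ((Real.continuous_exp.comp (hf.comp h1)).mul (hψ.comp h1))

lemma ruelle_integrable (hf : Continuous f) {ψ : (ℕ → M) → ℝ} (hψ : Continuous ψ) (x : ℕ → M) :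
    Integrable (fun a => Real.exp (f (consSeq a x)) * ψ (consSeq a x)) μ :=
  (ruelle_integrand_continuous f hf hψ x).integrable_of_hasCompactSupport
    ((isClosed_tsupport _).isCompact)

lemma ruelle_continuous_s11 (hf : Continuous f) {ψ : (ℕ → M) → ℝ} (hψ : Continuous ψ) :
    Continuous (Ruelle μ f ψ) := by
  obtain ⟨Cf, _, hCf⟩ := bound_abs hf
  obtain ⟨Cψ, _, hCψ⟩ := bound_abs hψ
  apply continuous_of_dominated (bound := fun _ => Real.exp Cf * Cψ)
  · intro x
    exact (ruelle_integrand_continuous f hf hψ x).aestronglyMeasurable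
  · intro x
    apply Filter.Eventually.of_forall
    intro a
    have h1 : |f (consSeq a x)| ≤ Cf := hCf _
    have h2 : |ψ (consSeq a x)| ≤ Cψ := hCψ _
    calc ‖Real.exp (f (consSeq a x)) * ψ (consSeq a x)‖
        = Real.exp (f (consSeq a x)) * |ψ (consSeq a x)| := by
          rw [Real.norm_eq_abs, abs_mul, abs_of_pos (Real.exp_pos _)]
      _ ≤ Real.exp Cf * Cψ := by
          apply mul_le_mul (Real.exp_le_exp.2 (le_of_abs_le h1)) h2 (abs_nonneg _)
            (Real.exp_pos _).le
  · exact integrable_const _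
  · apply Filter.Eventually.of_forall
    intro a
    have h1 : Continuous fun x : ℕ → M => consSeq a x := continuous_consSeq_right a
    exact ((Real.continuous_exp.comp (hf.comp h1)).mul (hψ.comp h1))

lemma ruelle_iter_continuous (hf : Continuous f) {ψ : (ℕ → M) → ℝ} (hψ : Continuous ψ)
    (n : ℕ) : Continuous ((Ruelle μ f)^[n] ψ) := by
  induction n generalizing ψ with
  | zero => exact hψ
  | succ m ih =>
    rw [Function.iterate_succ_apply]
    exact ih (ruelle_continuous_s11 μ f hf hψ)

lemma ruelle_const_mul (c : ℝ) (ψ : (ℕ → M) → ℝ) :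
    Ruelle μ f (fun x => c * ψ x) = fun x => c * Ruelle μ f ψ x := by
  funext x
  unfold Ruelle
  rw [← integral_const_mul]
  congr 1
  funext a
  ring

lemma ruelle_iter_const_mul (c : ℝ) (ψ : (ℕ → M) → ℝ) (n : ℕ) :
    (Ruelle μ f)^[n] (fun x => c * ψ x) = fun x => c * (Ruelle μ f)^[n] ψ x := by
  induction n generalizing ψ with
  | zero => rfl
  | succ m ih =>
    rw [Function.iterate_succ_apply, Function.iterate_succ_apply,
      ruelle_const_mul μ f c ψ, ih]

lemma ruelle_shift_mul (g ψ : (ℕ → M) → ℝ) :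
    Ruelle μ f (fun y => g (shift y) * ψ y) = fun x => g x * Ruelle μ f ψ x := by
  funext x
  unfold Ruelle
  rw [← integral_const_mul]
  congr 1
  funext a
  show Real.exp (f (consSeq a x)) * (g (shift (consSeq a x)) * ψ (consSeq a x))
      = g x * (Real.exp (f (consSeq a x)) * ψ (consSeq a x))
  have hsc : shift (consSeq a x) = x := rfl
  rw [hsc]
  ring

lemma ruelle_iter_shift_mul (g ψ : (ℕ → M) → ℝ) (n : ℕ) :
    (Ruelle μ f)^[n] (fun y => g (shift^[n] y) * ψ y)
      = fun x => g x * (Ruelle μ f)^[n] ψ x := by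
  induction n generalizing ψ with
  | zero => rfl
  | succ m ih =>
    rw [Function.iterate_succ_apply, Function.iterate_succ_apply]
    have step : Ruelle μ f (fun y => g (shift^[m + 1] y) * ψ y)
        = fun x => g (shift^[m] x) * Ruelle μ f ψ x := by
      have : (fun y => g (shift^[m + 1] y) * ψ y)
          = fun y => (fun z => g (shift^[m] z)) (shift y) * ψ y := by
        funext y
        rw [Function.iterate_succ_apply]
      rw [this, ruelle_shift_mul μ f (fun z => g (shift^[m] z)) ψ]
    rw [step]
    exact ih (Ruelle μ f ψ)

lemma ruelle_iter_comp_shift (g : (ℕ → M) → ℝ) (n : ℕ) :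
    (Ruelle μ f)^[n] (fun y => g (shift^[n] y))
      = fun x => g x * (Ruelle μ f)^[n] 1 x := by
  have : (fun y => g (shift^[n] y)) = fun y => g (shift^[n] y) * (1 : (ℕ → M) → ℝ) y := by
    funext y; simp
  rw [this, ruelle_iter_shift_mul μ f g 1 n]


lemma ruelle_sum (hf : Continuous f) (F : ℕ → (ℕ → M) → ℝ) (hF : ∀ j, Continuous (F j))
    (s : Finset ℕ) :
    Ruelle μ f (fun x => ∑ j ∈ s, F j x) = fun x => ∑ j ∈ s, Ruelle μ f (F j) x := by
  funext x
  show (∫ a, Real.exp (f (consSeq a x)) * (∑ j ∈ s, F j (consSeq a x)) ∂μ)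
      = ∑ j ∈ s, Ruelle μ f (F j) x
  simp only [Finset.mul_sum]
  exact integral_finset_sum s fun j _ => ruelle_integrable μ f hf (hF j) x

lemma ruelle_iter_sum (hf : Continuous f) (F : ℕ → (ℕ → M) → ℝ)
    (hF : ∀ j, Continuous (F j)) (s : Finset ℕ) (n : ℕ) :
    (Ruelle μ f)^[n] (fun x => ∑ j ∈ s, F j x)
      = fun x => ∑ j ∈ s, (Ruelle μ f)^[n] (F j) x := by
  induction n generalizing F with
  | zero => rfl
  | succ m ih =>
    rw [Function.iterate_succ_apply, ruelle_sum μ f hf F hF s,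
      ih (fun j => Ruelle μ f (F j)) (fun j => ruelle_continuous_s11 μ f hf (hF j))]
    funext x
    simp only [Function.iterate_succ_apply]

lemma ruelle_add (hf : Continuous f) {ψ₁ ψ₂ : (ℕ → M) → ℝ}
    (h₁ : Continuous ψ₁) (h₂ : Continuous ψ₂) :
    Ruelle μ f (fun x => ψ₁ x + ψ₂ x) = fun x => Ruelle μ f ψ₁ x + Ruelle μ f ψ₂ x := by
  funext x
  show (∫ a, Real.exp (f (consSeq a x)) * (ψ₁ (consSeq a x) + ψ₂ (consSeq a x)) ∂μ) = _
  simp only [mul_add]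
  exact integral_add (ruelle_integrable μ f hf h₁ x) (ruelle_integrable μ f hf h₂ x)

lemma ruelle_iter_add (hf : Continuous f) {ψ₁ ψ₂ : (ℕ → M) → ℝ}
    (h₁ : Continuous ψ₁) (h₂ : Continuous ψ₂) (n : ℕ) :
    (Ruelle μ f)^[n] (fun x => ψ₁ x + ψ₂ x)
      = fun x => (Ruelle μ f)^[n] ψ₁ x + (Ruelle μ f)^[n] ψ₂ x := by
  induction n generalizing ψ₁ ψ₂ with
  | zero => rfl
  | succ m ih =>
    rw [Function.iterate_succ_apply, ruelle_add μ f hf h₁ h₂,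
      ih (ruelle_continuous_s11 μ f hf h₁) (ruelle_continuous_s11 μ f hf h₂)]
    funext x
    simp only [Function.iterate_succ_apply]

lemma ruelle_iter_nonneg (ψ : (ℕ → M) → ℝ) (hψ : ∀ y, 0 ≤ ψ y) (n : ℕ) (x : ℕ → M) :
    0 ≤ (Ruelle μ f)^[n] ψ x := by
  induction n generalizing ψ with
  | zero => exact hψ x
  | succ m ih =>
    rw [Function.iterate_succ_apply]
    exact ih (Ruelle μ f ψ)
      (fun y => integral_nonneg fun a => mul_nonneg (Real.exp_pos _).le (hψ _))

lemma ruelle_abs_le (hf : Continuous f) {ψ ρ : (ℕ → M) → ℝ} (hψ : Continuous ψ)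
    (hρ : Continuous ρ) (hle : ∀ y, |ψ y| ≤ ρ y) (x : ℕ → M) :
    |Ruelle μ f ψ x| ≤ Ruelle μ f ρ x := by
  unfold Ruelle
  calc |∫ a, Real.exp (f (consSeq a x)) * ψ (consSeq a x) ∂μ|
      ≤ ∫ a, |Real.exp (f (consSeq a x)) * ψ (consSeq a x)| ∂μ := by
        rw [← Real.norm_eq_abs]
        refine (norm_integral_le_integral_norm _).trans_eq ?_
        simp only [Real.norm_eq_abs]
    _ ≤ ∫ a, Real.exp (f (consSeq a x)) * ρ (consSeq a x) ∂μ := by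
        apply integral_mono (ruelle_integrable μ f hf hψ x).abs
          (ruelle_integrable μ f hf hρ x)
        intro a
        dsimp only
        rw [abs_mul, abs_of_pos (Real.exp_pos _)]
        exact mul_le_mul_of_nonneg_left (hle _) (Real.exp_pos _).le

lemma ruelle_iter_abs_le (hf : Continuous f) {ψ ρ : (ℕ → M) → ℝ} (hψ : Continuous ψ)
    (hρ : Continuous ρ) (hle : ∀ y, |ψ y| ≤ ρ y) (n : ℕ) (x : ℕ → M) :
    |(Ruelle μ f)^[n] ψ x| ≤ (Ruelle μ f)^[n] ρ x := by
  induction n generalizing ψ ρ with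
  | zero => exact hle x
  | succ m ih =>
    rw [Function.iterate_succ_apply, Function.iterate_succ_apply]
    exact ih (ruelle_continuous_s11 μ f hf hψ) (ruelle_continuous_s11 μ f hf hρ)
      (fun y => ruelle_abs_le μ f hf hψ hρ hle y)

lemma continuous_shift_iter (j : ℕ) :
    Continuous (shift^[j] : (ℕ → M) → ℕ → M) := by
  induction j with
  | zero => exact continuous_id
  | succ m ih =>
    rw [Function.iterate_succ]
    exact ih.comp continuous_shift

lemma ruelle_iter_birkhoff (hf : Continuous f) {φ : (ℕ → M) → ℝ} (hφ : Continuous φ)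
    (n : ℕ) :
    (Ruelle μ f)^[n] (birkhoff φ n)
      = fun x => ∑ j ∈ Finset.range n,
          (Ruelle μ f)^[n - j] (fun y => φ y * (Ruelle μ f)^[j] 1 y) x := by
  have h1 : birkhoff φ n
      = fun x => ∑ j ∈ Finset.range n, (fun y => φ (shift^[j] y)) x := rfl
  rw [h1, ruelle_iter_sum μ f hf (fun j y => φ (shift^[j] y))
    (fun j => hφ.comp (continuous_shift_iter j)) (Finset.range n) n]
  funext x
  apply Finset.sum_congr rfl
  intro j hj
  have hjn : j ≤ n := le_of_lt (Finset.mem_range.1 hj)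
  have h2 : (Ruelle μ f)^[n] (fun y => φ (shift^[j] y))
      = (Ruelle μ f)^[n - j] ((Ruelle μ f)^[j] (fun y => φ (shift^[j] y))) := by
    rw [← Function.iterate_add_apply, Nat.sub_add_cancel hjn]
  rw [h2, ruelle_iter_comp_shift μ f φ j]

end Aux

/-- Uniform convergence of normalized Birkhoff averages under the transfer operator. -/
theorem normalized_birkhoff_average_tendstoUniformly
    {M : Type*} [MetricSpace M] [CompactSpace M] [MeasurableSpace M] [BorelSpace M]
    (μ : Measure M) [IsProbabilityMeasure μ]
    (hfull : ∀ U : Set M, IsOpen U → U.Nonempty → 0 < μ U)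
    (f : (ℕ → M) → ℝ) (hf : Continuous f)
    (lam : ℝ) (hlam : 0 < lam)
    (h : (ℕ → M) → ℝ) (hhc : Continuous h) (hhpos : ∀ x, 0 < h x)
    (ν : Measure (ℕ → M)) [IsProbabilityMeasure ν]
    (hconv : ∀ ψ : (ℕ → M) → ℝ, Continuous ψ →
      TendstoUniformly
        (fun (n : ℕ) (x : ℕ → M) => (lam ^ n)⁻¹ * (Ruelle μ f)^[n] ψ x)
        (fun x => h x * ∫ y, ψ y ∂ν) atTop) :
    ∀ φ : (ℕ → M) → ℝ, Continuous φ →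
      TendstoUniformly
        (fun (n : ℕ) (x : ℕ → M) =>
          (n : ℝ)⁻¹ * (Ruelle μ f)^[n] (birkhoff φ n) x / (Ruelle μ f)^[n] 1 x)
        (fun _ => ∫ y, φ y * h y ∂ν) atTop := by
  intro φ hφ
  set c : ℝ := ∫ y, φ y * h y ∂ν with hc
  -- basic bounds
  obtain ⟨Cφ, hCφ0, hCφ⟩ := bound_abs hφ
  obtain ⟨Ch, hCh0, hCh⟩ := bound_abs hhc
  have hMne : Nonempty M := by
    by_contra hM
    rw [not_nonempty_iff] at hM
    have h1 : μ Set.univ = 1 := measure_univ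
    rw [Set.univ_eq_empty_iff.2 hM, measure_empty] at h1
    exact one_ne_zero h1.symm
  have hΩne : Nonempty (ℕ → M) := ⟨fun _ => Classical.arbitrary M⟩
  obtain ⟨x₀, -, hx₀⟩ := isCompact_univ.exists_isMinOn Set.univ_nonempty hhc.continuousOn
  set εh : ℝ := h x₀ with hεh
  have hεhpos : 0 < εh := hhpos x₀
  have hεhle : ∀ x, εh ≤ h x := fun x => hx₀ (Set.mem_univ x)
  have lam_pow_pos : ∀ m : ℕ, (0:ℝ) < (lam ^ m)⁻¹ := fun m => inv_pos.2 (pow_pos hlam m)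
  -- the two uniform convergences we use
  have hT1 : TendstoUniformly (fun n x => (lam ^ n)⁻¹ * (Ruelle μ f)^[n] 1 x) h atTop := by
    have := hconv 1 continuous_one
    simpa using this
  have hT2 : TendstoUniformly
      (fun n x => (lam ^ n)⁻¹ * (Ruelle μ f)^[n] (fun y => φ y * h y) x)
      (fun x => h x * c) atTop := hconv (fun y => φ y * h y) (hφ.mul hhc)
  rw [Metric.tendstoUniformly_iff]
  intro ε hε
  -- constants
  set δ : ℝ := ε * εh / 16 with hδ
  have hδpos : 0 < δ := by positivity
  set ε₁ : ℝ := min (min 1 (εh / 2)) (min (δ / ((Cφ + 1) * (Ch + 1))) (ε * εh / (8 * (|c| + 1))))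
    with hε₁
  have hε₁pos : 0 < ε₁ :=
    lt_min (lt_min one_pos (by positivity)) (lt_min (by positivity) (by positivity))
  have hε₁le1 : ε₁ ≤ 1 := le_trans (min_le_left _ _) (min_le_left _ _)
  have hε₁leεh : ε₁ ≤ εh / 2 := le_trans (min_le_left _ _) (min_le_right _ _)
  have hε₁leδ : ε₁ ≤ δ / ((Cφ + 1) * (Ch + 1)) := le_trans (min_le_right _ _) (min_le_left _ _)
  have hε₁lec : ε₁ ≤ ε * εh / (8 * (|c| + 1)) := le_trans (min_le_right _ _) (min_le_right _ _)
  obtain ⟨N₁, hN₁⟩ := Filter.eventually_atTop.1 ((Metric.tendstoUniformly_iff.1 hT1) ε₁ hε₁pos)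
  obtain ⟨N₂, hN₂⟩ := Filter.eventually_atTop.1 ((Metric.tendstoUniformly_iff.1 hT2) δ hδpos)
  set N : ℕ := max 1 (max N₁ N₂) with hN
  set B : ℝ := Cφ * (Ch + 1) + Ch * |c| with hB
  have hBnn : 0 ≤ B := by positivity
  have hsmall : ∀ᶠ n : ℕ in atTop, ((2 * N : ℕ) : ℝ) * B / n < δ :=
    (tendsto_const_div_atTop_nhds_zero_nat (((2 * N : ℕ) : ℝ) * B)).eventually_lt_const hδpos
  filter_upwards [Filter.eventually_ge_atTop (2 * N + 1), hsmall] with n hn1 hn2 x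
  -- basic index facts
  have hNN₁ : N₁ ≤ N := le_max_of_le_right (le_max_left _ _)
  have hNN₂ : N₂ ≤ N := le_max_of_le_right (le_max_right _ _)
  have hN1le : 1 ≤ N := le_max_left _ _
  have hnN : N ≤ n := by omega
  have hnpos : 0 < n := by omega
  -- closeness facts, in usable form
  have hclose1 : ∀ m ≥ N₁, ∀ y, |h y - (lam ^ m)⁻¹ * (Ruelle μ f)^[m] 1 y| < ε₁ := by
    intro m hm y
    have := hN₁ m hm y
    rwa [Real.dist_eq] at this
  have hclose2 : ∀ m ≥ N₂, ∀ y,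
      |h y * c - (lam ^ m)⁻¹ * (Ruelle μ f)^[m] (fun z => φ z * h z) y| < δ := by
    intro m hm y
    have := hN₂ m hm y
    rwa [Real.dist_eq] at this
  -- upper bound for the normalized iterates of 1
  have hDub : ∀ m ≥ N₁, (lam ^ m)⁻¹ * (Ruelle μ f)^[m] 1 x ≤ Ch + 1 := by
    intro m hm
    have h1 := hclose1 m hm x
    have h2 : h x ≤ Ch := le_of_abs_le (hCh x)
    have h3 := abs_lt.1 h1
    linarith [h3.1, hε₁le1]
  -- the normalized terms
  set u : ℕ → ℝ := fun j => (lam ^ n)⁻¹ * (Ruelle μ f)^[n] (fun y => φ (shift^[j] y)) x with hu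
  have key1 : (lam ^ n)⁻¹ * (Ruelle μ f)^[n] (birkhoff φ n) x = ∑ j ∈ Finset.range n, u j := by
    have h1 : birkhoff φ n = fun z => ∑ j ∈ Finset.range n, (fun y => φ (shift^[j] y)) z := rfl
    rw [h1, ruelle_iter_sum μ f hf (fun j y => φ (shift^[j] y))
      (fun j => hφ.comp (continuous_shift_iter j)) (Finset.range n) n]
    simp only [hu]
    rw [Finset.mul_sum]
  -- crude bound, valid for every j
  have crude : ∀ j, |u j - h x * c| ≤ B := by
    intro j
    have habs : |(Ruelle μ f)^[n] (fun y => φ (shift^[j] y)) x|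
        ≤ (Ruelle μ f)^[n] (fun y => Cφ * (1 : (ℕ → M) → ℝ) y) x :=
      ruelle_iter_abs_le μ f hf (hφ.comp (continuous_shift_iter j))
        (continuous_const.mul continuous_one) (fun y => by simpa using hCφ _) n x
    rw [ruelle_iter_const_mul μ f Cφ 1 n] at habs
    have hub := hDub n (le_trans hNN₁ hnN)
    have hun : |u j| ≤ Cφ * (Ch + 1) := by
      have : |u j| = (lam ^ n)⁻¹ * |(Ruelle μ f)^[n] (fun y => φ (shift^[j] y)) x| := by
        rw [hu]
        rw [abs_mul, abs_of_pos (lam_pow_pos n)]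
      rw [this]
      calc (lam ^ n)⁻¹ * |(Ruelle μ f)^[n] (fun y => φ (shift^[j] y)) x|
          ≤ (lam ^ n)⁻¹ * (Cφ * (Ruelle μ f)^[n] 1 x) :=
            mul_le_mul_of_nonneg_left habs (lam_pow_pos n).le
        _ = Cφ * ((lam ^ n)⁻¹ * (Ruelle μ f)^[n] 1 x) := by ring
        _ ≤ Cφ * (Ch + 1) := mul_le_mul_of_nonneg_left hub hCφ0
    have hhxc : |h x * c| ≤ Ch * |c| := by
      rw [abs_mul]
      exact mul_le_mul_of_nonneg_right (hCh x) (abs_nonneg c)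
    calc |u j - h x * c| ≤ |u j| + |h x * c| := abs_sub _ _
      _ ≤ Cφ * (Ch + 1) + Ch * |c| := add_le_add hun hhxc
      _ = B := rfl
  -- good estimate for middle indices
  have good : ∀ j, N ≤ j → j + N ≤ n → |u j - h x * c| ≤ 2 * δ := by
    intro j hjN hjn
    have hjN₁ : N₁ ≤ j := le_trans hNN₁ hjN
    set m : ℕ := n - j with hm
    have hmn : m + j = n := by omega
    have hmN₁ : N₁ ≤ m := by omega
    have hmN₂ : N₂ ≤ m := by omega
    have hlj : (lam : ℝ) ^ j ≠ 0 := (pow_pos hlam j).ne'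
    have hlm : (lam : ℝ) ^ m ≠ 0 := (pow_pos hlam m).ne'
    -- rewrite u j
    have step1 : (Ruelle μ f)^[n] (fun y => φ (shift^[j] y)) x
        = (Ruelle μ f)^[m] (fun y => φ y * (Ruelle μ f)^[j] 1 y) x := by
      have e1 : (Ruelle μ f)^[n] (fun y => φ (shift^[j] y))
          = (Ruelle μ f)^[m] ((Ruelle μ f)^[j] (fun y => φ (shift^[j] y))) := by
        rw [← hmn, Function.iterate_add_apply]
      rw [e1, ruelle_iter_comp_shift μ f φ j]
    have decomp : (fun y => φ y * (Ruelle μ f)^[j] 1 y)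
        = fun y => lam ^ j *
            (φ y * ((lam ^ j)⁻¹ * (Ruelle μ f)^[j] 1 y - h y) + φ y * h y) := by
      funext y
      field_simp
      ring
    have hg_cont : Continuous fun y => (lam ^ j)⁻¹ * (Ruelle μ f)^[j] 1 y :=
      continuous_const.mul (ruelle_iter_continuous μ f hf continuous_one j)
    have hψ₁c : Continuous fun y => φ y * ((lam ^ j)⁻¹ * (Ruelle μ f)^[j] 1 y - h y) :=
      hφ.mul (hg_cont.sub hhc)
    have hψ₂c : Continuous fun y => φ y * h y := hφ.mul hhc
    have step2 : (Ruelle μ f)^[m] (fun y => φ y * (Ruelle μ f)^[j] 1 y) x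
        = lam ^ j *
          ((Ruelle μ f)^[m] (fun y => φ y * ((lam ^ j)⁻¹ * (Ruelle μ f)^[j] 1 y - h y)) x
            + (Ruelle μ f)^[m] (fun y => φ y * h y) x) := by
      rw [decomp, ruelle_iter_const_mul μ f (lam ^ j)
        (fun y => φ y * ((lam ^ j)⁻¹ * (Ruelle μ f)^[j] 1 y - h y) + φ y * h y) m,
        ruelle_iter_add μ f hf hψ₁c hψ₂c m]
    have hlampow : (lam ^ n)⁻¹ * lam ^ j = (lam ^ m)⁻¹ := by
      rw [← hmn, pow_add]
      field_simp
    have u_eq : u j =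
        (lam ^ m)⁻¹ * (Ruelle μ f)^[m] (fun y => φ y * ((lam ^ j)⁻¹ * (Ruelle μ f)^[j] 1 y - h y)) x
        + (lam ^ m)⁻¹ * (Ruelle μ f)^[m] (fun y => φ y * h y) x := by
      have : u j = (lam ^ n)⁻¹ * ((Ruelle μ f)^[m] (fun y => φ y * (Ruelle μ f)^[j] 1 y) x) := by
        rw [show u j = (lam ^ n)⁻¹ * (Ruelle μ f)^[n] (fun y => φ (shift^[j] y)) x from rfl,
          step1]
      rw [this, step2, ← mul_assoc, hlampow]
      ring
    -- estimate the first term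
    have hfirst : |(lam ^ m)⁻¹ *
        (Ruelle μ f)^[m] (fun y => φ y * ((lam ^ j)⁻¹ * (Ruelle μ f)^[j] 1 y - h y)) x| ≤ δ := by
      have hle : ∀ y, |φ y * ((lam ^ j)⁻¹ * (Ruelle μ f)^[j] 1 y - h y)|
          ≤ (Cφ * ε₁) * (1 : (ℕ → M) → ℝ) y := by
        intro y
        have h1 : |(lam ^ j)⁻¹ * (Ruelle μ f)^[j] 1 y - h y| ≤ ε₁ := by
          rw [abs_sub_comm]
          exact (hclose1 j hjN₁ y).le
        rw [abs_mul]
        have h2 : |φ y| ≤ Cφ := hCφ y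
        simp only [Pi.one_apply, mul_one]
        exact mul_le_mul h2 h1 (abs_nonneg _) hCφ0
      have habs := ruelle_iter_abs_le μ f hf hψ₁c (ρ := fun y => (Cφ * ε₁) * (1 : (ℕ → M) → ℝ) y)
        (continuous_const.mul continuous_one) hle m x
      rw [ruelle_iter_const_mul μ f (Cφ * ε₁) 1 m] at habs
      have hub := hDub m hmN₁
      have h3 : (Cφ * ε₁) * ((lam ^ m)⁻¹ * (Ruelle μ f)^[m] 1 x) ≤ Cφ * ε₁ * (Ch + 1) :=
        mul_le_mul_of_nonneg_left hub (by positivity)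
      have h4 : Cφ * ε₁ * (Ch + 1) ≤ δ := by
        have h5 : ε₁ * ((Cφ + 1) * (Ch + 1)) ≤ δ := by
          rw [← le_div_iff₀ (by positivity : (0:ℝ) < (Cφ + 1) * (Ch + 1))]
          exact hε₁leδ
        nlinarith [hε₁pos.le]
      calc |(lam ^ m)⁻¹ *
          (Ruelle μ f)^[m] (fun y => φ y * ((lam ^ j)⁻¹ * (Ruelle μ f)^[j] 1 y - h y)) x|
          = (lam ^ m)⁻¹ * |(Ruelle μ f)^[m]
              (fun y => φ y * ((lam ^ j)⁻¹ * (Ruelle μ f)^[j] 1 y - h y)) x| := by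
            rw [abs_mul, abs_of_pos (lam_pow_pos m)]
        _ ≤ (lam ^ m)⁻¹ * ((Cφ * ε₁) * (Ruelle μ f)^[m] 1 x) :=
            mul_le_mul_of_nonneg_left habs (lam_pow_pos m).le
        _ = (Cφ * ε₁) * ((lam ^ m)⁻¹ * (Ruelle μ f)^[m] 1 x) := by ring
        _ ≤ Cφ * ε₁ * (Ch + 1) := h3
        _ ≤ δ := h4
    have hsecond : |(lam ^ m)⁻¹ * (Ruelle μ f)^[m] (fun y => φ y * h y) x - h x * c| ≤ δ := by
      rw [abs_sub_comm]
      exact (hclose2 m hmN₂ x).le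
    calc |u j - h x * c|
        = |(lam ^ m)⁻¹ *
            (Ruelle μ f)^[m] (fun y => φ y * ((lam ^ j)⁻¹ * (Ruelle μ f)^[j] 1 y - h y)) x
          + ((lam ^ m)⁻¹ * (Ruelle μ f)^[m] (fun y => φ y * h y) x - h x * c)| := by
          rw [u_eq]; congr 1; ring
      _ ≤ |(lam ^ m)⁻¹ *
            (Ruelle μ f)^[m] (fun y => φ y * ((lam ^ j)⁻¹ * (Ruelle μ f)^[j] 1 y - h y)) x|
          + |(lam ^ m)⁻¹ * (Ruelle μ f)^[m] (fun y => φ y * h y) x - h x * c| := abs_add_le _ _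
      _ ≤ δ + δ := add_le_add hfirst hsecond
      _ = 2 * δ := by ring
  -- sum estimate
  have sum_est : |∑ j ∈ Finset.range n, u j - n * (h x * c)|
      ≤ n * (2 * δ) + ((2 * N : ℕ) : ℝ) * B := by
    have e1 : ∑ j ∈ Finset.range n, u j - n * (h x * c)
        = ∑ j ∈ Finset.range n, (u j - h x * c) := by
      rw [Finset.sum_sub_distrib, Finset.sum_const, Finset.card_range, nsmul_eq_mul]
    rw [e1]
    set S : Finset ℕ := Finset.Ico N (n - N + 1) with hS
    have hSsub : S ⊆ Finset.range n := by
      intro j hj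
      rw [hS, Finset.mem_Ico] at hj
      rw [Finset.mem_range]
      omega
    have hScard : S.card = n - N + 1 - N := by rw [hS, Nat.card_Ico]
    have hbadcard : (Finset.range n \ S).card ≤ 2 * N := by
      rw [Finset.card_sdiff_of_subset hSsub, Finset.card_range, hScard]
      omega
    calc |∑ j ∈ Finset.range n, (u j - h x * c)|
        ≤ ∑ j ∈ Finset.range n, |u j - h x * c| := Finset.abs_sum_le_sum_abs _ _
      _ = ∑ j ∈ Finset.range n \ S, |u j - h x * c| + ∑ j ∈ S, |u j - h x * c| :=
          (Finset.sum_sdiff hSsub).symm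
      _ ≤ ((Finset.range n \ S).card : ℝ) * B + (S.card : ℝ) * (2 * δ) := by
          apply add_le_add
          · have := Finset.sum_le_card_nsmul (Finset.range n \ S)
              (fun j => |u j - h x * c|) B (fun j _ => crude j)
            rwa [nsmul_eq_mul] at this
          · have := Finset.sum_le_card_nsmul S (fun j => |u j - h x * c|) (2 * δ)
              (fun j hj => by
                rw [hS, Finset.mem_Ico] at hj
                exact good j hj.1 (by omega))
            rwa [nsmul_eq_mul] at this
      _ ≤ ((2 * N : ℕ) : ℝ) * B + (n : ℝ) * (2 * δ) := by
          apply add_le_add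
          · exact mul_le_mul_of_nonneg_right (by exact_mod_cast hbadcard) hBnn
          · apply mul_le_mul_of_nonneg_right _ (by positivity)
            exact_mod_cast (Finset.card_le_card hSsub).trans (by rw [Finset.card_range])
      _ = n * (2 * δ) + ((2 * N : ℕ) : ℝ) * B := by ring
  -- the denominator
  set D : ℝ := (lam ^ n)⁻¹ * (Ruelle μ f)^[n] 1 x with hD
  have hclose1n := hclose1 n (le_trans hNN₁ hnN) x
  have hDlb : εh / 2 ≤ D := by
    have h1 := (abs_lt.1 hclose1n).2
    have h2 := hεhle x
    rw [← hD] at h1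
    linarith
  have hDpos : 0 < D := lt_of_lt_of_le (by linarith) hDlb
  -- rewrite the target expression
  have hnR : (0:ℝ) < n := by exact_mod_cast hnpos
  have hexpr : (n : ℝ)⁻¹ * (Ruelle μ f)^[n] (birkhoff φ n) x / (Ruelle μ f)^[n] 1 x
      = ((n : ℝ)⁻¹ * ∑ j ∈ Finset.range n, u j) / D := by
    rw [hD, ← key1]
    rw [show (n : ℝ)⁻¹ * ((lam ^ n)⁻¹ * (Ruelle μ f)^[n] (birkhoff φ n) x)
        = (lam ^ n)⁻¹ * ((n : ℝ)⁻¹ * (Ruelle μ f)^[n] (birkhoff φ n) x) by ring]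
    rw [mul_div_mul_left _ _ (ne_of_gt (lam_pow_pos n))]
  set A : ℝ := (n : ℝ)⁻¹ * ∑ j ∈ Finset.range n, u j with hA
  have hAclose : |A - h x * c| ≤ 3 * δ := by
    have e2 : A - h x * c = (n : ℝ)⁻¹ * (∑ j ∈ Finset.range n, u j - n * (h x * c)) := by
      rw [hA]
      field_simp
    rw [e2, abs_mul, abs_of_pos (inv_pos.2 hnR)]
    calc (n : ℝ)⁻¹ * |∑ j ∈ Finset.range n, u j - n * (h x * c)|
        ≤ (n : ℝ)⁻¹ * (n * (2 * δ) + ((2 * N : ℕ) : ℝ) * B) :=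
          mul_le_mul_of_nonneg_left sum_est (inv_pos.2 hnR).le
      _ = 2 * δ + ((2 * N : ℕ) : ℝ) * B / n := by
          field_simp
      _ ≤ 2 * δ + δ := by linarith [hn2]
      _ = 3 * δ := by ring
  rw [Real.dist_eq, hexpr]
  have hnum : |A - c * D| ≤ 3 * δ + |c| * ε₁ := by
    have e3 : A - c * D = (A - h x * c) + c * (h x - D) := by ring
    rw [e3]
    calc |(A - h x * c) + c * (h x - D)| ≤ |A - h x * c| + |c * (h x - D)| := abs_add_le _ _
      _ = |A - h x * c| + |c| * |h x - D| := by rw [abs_mul]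
      _ ≤ 3 * δ + |c| * ε₁ := by
          apply add_le_add hAclose
          apply mul_le_mul_of_nonneg_left _ (abs_nonneg c)
          rw [← hD] at hclose1n
          exact hclose1n.le
  have e4 : |c - A / D| = |A - c * D| / D := by
    rw [abs_sub_comm]
    have e5 : A / D - c = (A - c * D) / D := by
      field_simp
    rw [e5, abs_div, abs_of_pos hDpos]
  rw [e4]
  have hfinal : |A - c * D| / D ≤ (3 * δ + |c| * ε₁) / (εh / 2) :=
    div_le_div₀ (by positivity) hnum (by linarith) hDlb
  refine lt_of_le_of_lt hfinal ?_
  rw [div_lt_iff₀ (by linarith)]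
  have hc1 : |c| * ε₁ ≤ ε * εh / 8 := by
    have h6 := mul_le_mul_of_nonneg_left hε₁lec (abs_nonneg c)
    have hcc : (0:ℝ) < |c| + 1 := by positivity
    have hkey : |c| / (|c| + 1) ≤ 1 := by
      rw [div_le_one hcc]
      linarith
    have h7 : |c| * (ε * εh / (8 * (|c| + 1))) ≤ ε * εh / 8 := by
      have e9 : |c| * (ε * εh / (8 * (|c| + 1))) = (|c| / (|c| + 1)) * (ε * εh / 8) := by
        rw [div_mul_div_comm, ← mul_div_assoc, mul_comm (|c| + 1) 8]
      rw [e9]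
      calc (|c| / (|c| + 1)) * (ε * εh / 8) ≤ 1 * (ε * εh / 8) :=
            mul_le_mul_of_nonneg_right hkey (by positivity)
        _ = ε * εh / 8 := one_mul _
    linarith
  have h8 : 0 < ε * εh := mul_pos hε hεhpos
  rw [hδ]
  nlinarith [h8]
end
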